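/- Let x, x' ∈ R^n, set u = (x+x')/2 and v = (x−x')/2, and let b ∈ R. Then for every z ∈ R^n, with φ(t) = max(t,0): φ(⟨z,x⟩ − b) · φ(⟨z,x'⟩ − b) ≤ φ(⟨z,u⟩ − b)². -/
import Mathlib
open MeasureTheory ProbabilityTheory Real

lemma relu_aux (a c : ℝ) : max a 0 * max c 0 ≤ (max ((a+c)/2) 0) ^ 2 := by
  rcases le_or_gt a 0 with ha | ha
  · rw [max_eq_right ha, zero_mul]; positivity
  rcases le_or_gt c 0 with hc | hc
  · rw [max_eq_right hc, mul_zero]; positivity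
  rw [max_eq_left ha.le, max_eq_left hc.le, max_eq_left (by linarith)]
  nlinarith [sq_nonneg (a - c)]

/-- ReLU product inequality via the midpoint `u = (x+x')/2`. -/
theorem stmt2 (n : ℕ) (x x' : Fin n → ℝ) (b : ℝ) (z : Fin n → ℝ) :
    max ((∑ i, z i * x i) - b) 0 * max ((∑ i, z i * x' i) - b) 0
      ≤ (max ((∑ i, z i * ((x i + x' i) / 2)) - b) 0) ^ 2 := by
  have h : (∑ i, z i * ((x i + x' i) / 2))
      = (((∑ i, z i * x i) - b) + ((∑ i, z i * x' i) - b)) / 2 + b := by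
    have e : ∀ i, z i * ((x i + x' i) / 2) = (z i * x i)/2 + (z i * x' i)/2 := by
      intro i; ring
    simp_rw [e, Finset.sum_add_distrib, ← Finset.sum_div]
    ring
  rw [h]
  have := relu_aux ((∑ i, z i * x i) - b) ((∑ i, z i * x' i) - b)
  simpa using this
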